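/- Consider the binary affiliation random graph model with uniform group priors on n = 4 nodes: for an integer Q ≥ 2 and α, β ∈ [0,1], the distribution of K_4 is the probability mass function on x = (x_{ij})_{1≤i<j≤4} ∈ {0,1}^6 given by P_{Q,α,β}(x) = Σ_{z : {1,…,4}→{1,…,Q}} Q^{−4} · Π_{1≤i<j≤4} p(z(i),z(j))^{x_{ij}} (1−p(z(i),z(j)))^{1−x_{ij}}, where p(q,l) = α if q = l and β otherwise. If Q, Q′ ≥ 2 are integers, α ≠ β, α′ ≠ β′, and P_{Q,α,β} = P_{Q′,α′,β′} as functions on {0,1}^6, then Q = Q′, α = α′, and β = β′. That is, the parameters α, β and Q of the binary affiliation model with uniform group priors are identifiable from the distribution of K_4. -/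

import Mathlib

open Finset

section Helpers

/-- Equivalence between 4-tuples and functions on `Fin 4`. -/
def affEquiv4 (κ : Type*) : (κ × κ × κ × κ) ≃ (Fin 4 → κ) where
  toFun p := ![p.1, p.2.1, p.2.2.1, p.2.2.2]
  invFun z := (z 0, z 1, z 2, z 3)
  left_inv p := rfl
  right_inv z := by funext i; fin_cases i <;> rfl

lemma aff_sum_fn4 {κ : Type*} [Fintype κ] (g : κ → κ → κ → κ → ℝ) :
    (∑ z : Fin 4 → κ, g (z 0) (z 1) (z 2) (z 3))
      = ∑ a, ∑ b, ∑ c, ∑ d, g a b c d := by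
  rw [← Equiv.sum_comp (affEquiv4 κ) (fun z => g (z 0) (z 1) (z 2) (z 3))]
  simp only [affEquiv4, Equiv.coe_fn_mk, Matrix.cons_val_zero, Matrix.cons_val_one,
    Matrix.head_cons, Matrix.cons_val_two, Matrix.tail_cons, Matrix.cons_val_three]
  rw [Fintype.sum_prod_type]
  refine Finset.sum_congr rfl fun a _ => ?_
  rw [Fintype.sum_prod_type]
  refine Finset.sum_congr rfl fun b _ => ?_
  rw [Fintype.sum_prod_type]
  rfl

/-- Edge weight `β + D·1[a = b]`. -/
noncomputable def pe (β D : ℝ) {κ : Type*} [DecidableEq κ] (a b : κ) : ℝ :=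
  β + D * (if a = b then 1 else 0)

variable {κ : Type*} [Fintype κ] [DecidableEq κ] (β D : ℝ)

lemma aff_sum_pe (a : κ) : ∑ b, pe β D a b = (Fintype.card κ : ℝ) * β + D := by
  simp [pe, Finset.sum_add_distrib, ← Finset.mul_sum, Finset.card_univ, mul_comm]

lemma aff_sum_pe_mul (a b : κ) : ∑ c, pe β D a c * pe β D b c
    = (Fintype.card κ : ℝ) * β^2 + 2*β*D + D^2 * (if a = b then 1 else 0) := by
  have h : ∀ c : κ, pe β D a c * pe β D b c
      = β*β + β*D*(if a = c then 1 else 0) + β*D*(if b = c then 1 else 0)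
        + D*D*((if a = c then (1:ℝ) else 0) * (if b = c then 1 else 0)) := by
    intro c; simp only [pe]; ring
  rw [Finset.sum_congr rfl (fun c _ => h c)]
  have h2 : ∀ c : κ, (if a = c then (1:ℝ) else 0) * (if b = c then 1 else 0)
      = (if a = b then 1 else 0) * (if a = c then 1 else 0) := by
    intro c; split_ifs <;> simp_all
  simp only [Finset.sum_add_distrib, ← Finset.mul_sum]
  rw [Finset.sum_congr rfl (fun c _ => h2 c)]
  simp [← Finset.mul_sum, Finset.card_univ]
  ring

lemma aff_sum_pe_pick (f : κ → ℝ) (a : κ) :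
    ∑ c, f c * (if c = a then (1:ℝ) else 0) = f a := by
  simp

lemma aff_sum_ind (a : κ) : ∑ b : κ, (if a = b then (1:ℝ) else 0) = 1 := by simp

lemma aff_ind_symm (a b : κ) : (if a = b then (1:ℝ) else 0) = (if b = a then 1 else 0) := by
  simp [eq_comm]

lemma S1val : ∑ a : κ, ∑ b : κ, ∑ _c : κ, ∑ _d : κ, pe β D a b
    = (Fintype.card κ : ℝ)^4 * β + (Fintype.card κ : ℝ)^3 * D := by
  set n : ℝ := (Fintype.card κ : ℝ) with hn
  simp only [Finset.sum_const, Finset.card_univ, nsmul_eq_mul, ← hn]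
  rw [Finset.sum_congr rfl fun a (_ : a ∈ univ) => by
    rw [← Finset.mul_sum, ← Finset.mul_sum, aff_sum_pe]]
  rw [Finset.sum_const, Finset.card_univ, nsmul_eq_mul, ← hn]
  ring

lemma S3val : ∑ a : κ, ∑ b : κ, ∑ c : κ, ∑ _d : κ,
      pe β D a b * pe β D a c * pe β D b c
    = (Fintype.card κ : ℝ)^4 * β^3 + 3*(Fintype.card κ : ℝ)^3 * β^2*D
      + 3*(Fintype.card κ : ℝ)^2 * β*D^2 + (Fintype.card κ : ℝ)^2 * D^3 := by
  set n : ℝ := (Fintype.card κ : ℝ) with hn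
  have hc : ∀ a b : κ, ∑ c : κ, ∑ _d : κ, pe β D a b * pe β D a c * pe β D b c
      = n * (pe β D a b * (n * β^2 + 2*β*D + D^2 * (if a = b then 1 else 0))) := by
    intro a b
    simp only [Finset.sum_const, Finset.card_univ, nsmul_eq_mul, ← hn]
    rw [← Finset.mul_sum]
    congr 1
    rw [Finset.sum_congr rfl fun c _ => mul_assoc (pe β D a b) (pe β D a c) (pe β D b c),
      ← Finset.mul_sum, aff_sum_pe_mul]
  have hb : ∀ a : κ, ∑ b : κ, n * (pe β D a b * (n * β^2 + 2*β*D + D^2 * (if a = b then 1 else 0)))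
      = n * (n * (β * (n*β^2 + 2*β*D)) + (D*(n*β^2+2*β*D) + β*D^2 + D^3)) := by
    intro a
    rw [← Finset.mul_sum]
    congr 1
    have h : ∀ b : κ, pe β D a b * (n * β^2 + 2*β*D + D^2 * (if a = b then 1 else 0))
        = β * (n*β^2 + 2*β*D) + (D*(n*β^2+2*β*D) + β*D^2 + D^3) * (if a = b then 1 else 0) := by
      intro b; simp only [pe]; split_ifs <;> ring
    rw [Finset.sum_congr rfl fun b _ => h b, Finset.sum_add_distrib, ← Finset.mul_sum,
      ← Finset.mul_sum, aff_sum_ind, Finset.sum_const, Finset.card_univ, nsmul_eq_mul, ← hn,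
      mul_one]
    ring
  rw [Finset.sum_congr rfl fun a _ => (Finset.sum_congr rfl fun b _ => hc a b).trans (hb a),
    Finset.sum_const, Finset.card_univ, nsmul_eq_mul, ← hn]
  ring

lemma S4val : ∑ a : κ, ∑ b : κ, ∑ c : κ, ∑ d : κ,
      pe β D a b * pe β D b c * pe β D c d * pe β D a d
    = (Fintype.card κ : ℝ)^4 * β^4 + 4*(Fintype.card κ : ℝ)^3 * β^3*D
      + 6*(Fintype.card κ : ℝ)^2 * β^2*D^2 + 4*(Fintype.card κ : ℝ) * β*D^3
      + (Fintype.card κ : ℝ) * D^4 := by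
  set n : ℝ := (Fintype.card κ : ℝ) with hn
  have hd : ∀ a b c : κ, ∑ d : κ, pe β D a b * pe β D b c * pe β D c d * pe β D a d
      = pe β D a b * pe β D b c * (n * β^2 + 2*β*D + D^2 * (if c = a then 1 else 0)) := by
    intro a b c
    rw [Finset.sum_congr rfl fun d (_ : d ∈ univ) =>
      (by ring : pe β D a b * pe β D b c * pe β D c d * pe β D a d
        = pe β D a b * pe β D b c * (pe β D c d * pe β D a d)),
      ← Finset.mul_sum, aff_sum_pe_mul]
  have hc : ∀ a b : κ,
      ∑ c : κ, pe β D a b * pe β D b c * (n * β^2 + 2*β*D + D^2 * (if c = a then 1 else 0))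
      = pe β D a b * ((n*β^2+2*β*D) * (n*β+D) + D^2 * pe β D b a) := by
    intro a b
    rw [Finset.sum_congr rfl fun c (_ : c ∈ univ) =>
      (by ring : pe β D a b * pe β D b c * (n * β^2 + 2*β*D + D^2 * (if c = a then 1 else 0))
        = pe β D a b * ((n*β^2+2*β*D) * pe β D b c
            + D^2 * (pe β D b c * (if c = a then 1 else 0)))),
      ← Finset.mul_sum]
    congr 1
    rw [Finset.sum_add_distrib, ← Finset.mul_sum, ← Finset.mul_sum, aff_sum_pe,
      aff_sum_pe_pick (pe β D b) a]
  have hb : ∀ a : κ,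
      ∑ b : κ, pe β D a b * ((n*β^2+2*β*D) * (n*β+D) + D^2 * pe β D b a)
      = n * (β*((n*β^2+2*β*D)*(n*β+D)) + β^2*D^2)
        + (D*((n*β^2+2*β*D)*(n*β+D)) + 2*β*D^3 + D^4) := by
    intro a
    have h : ∀ b : κ, pe β D a b * ((n*β^2+2*β*D) * (n*β+D) + D^2 * pe β D b a)
        = (β*((n*β^2+2*β*D)*(n*β+D)) + β^2*D^2)
          + (D*((n*β^2+2*β*D)*(n*β+D)) + 2*β*D^3 + D^4) * (if a = b then 1 else 0) := by
      intro b
      simp only [pe, aff_ind_symm b a]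
      split_ifs <;> ring
    rw [Finset.sum_congr rfl fun b _ => h b, Finset.sum_add_distrib, ← Finset.mul_sum,
      aff_sum_ind, Finset.sum_const, Finset.card_univ, nsmul_eq_mul, ← hn, mul_one]
  rw [Finset.sum_congr rfl fun a (_ : a ∈ univ) => by
      rw [Finset.sum_congr rfl fun b (_ : b ∈ univ) =>
        (Finset.sum_congr rfl fun c (_ : c ∈ univ) => hd a b c).trans (hc a b), hb a],
    Finset.sum_const, Finset.card_univ, nsmul_eq_mul, ← hn]
  ring

end Helpers

section Extraction

lemma factor4 (G : Fin 4 → Fin 4 → Bool → ℝ) :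
    ∑ x : Fin 4 → Fin 4 → Bool, ∏ i, ∏ j, G i j (x i j)
      = ∏ i, ∏ j, (G i j true + G i j false) := by
  have h1 : ∀ i : Fin 4, (∏ j, (G i j true + G i j false))
      = ∑ f : Fin 4 → Bool, ∏ j, G i j (f j) := by
    intro i
    rw [← Fintype.prod_sum (fun j b => G i j b)]
    congr 1; funext j; rw [Fintype.sum_bool]
  calc ∑ x : Fin 4 → Fin 4 → Bool, ∏ i, ∏ j, G i j (x i j)
      = ∑ x : Fin 4 → (Fin 4 → Bool), ∏ i, (fun f => ∏ j, G i j (f j)) (x i) := rfl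
    _ = ∏ i, ∑ f : Fin 4 → Bool, ∏ j, G i j (f j) :=
        (Fintype.prod_sum (fun i (f : Fin 4 → Bool) => ∏ j, G i j (f j))).symm
    _ = ∏ i, ∏ j, (G i j true + G i j false) :=
        Finset.prod_congr rfl (fun i _ => (h1 i).symm)

lemma extract (Q : ℕ) (α β : ℝ) (c : Fin 4 → Fin 4 → Bool) :
    ∑ x : Fin 4 → Fin 4 → Bool,
      (∏ i, ∏ j, if c i j then (if x i j then (1:ℝ) else 0) else 1) *
      (∑ z : Fin 4 → Fin Q, ((Q : ℝ) ^ 4)⁻¹ *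
        ∏ i, ∏ j, (if i < j then
          (if x i j then (if z i = z j then α else β)
            else 1 - (if z i = z j then α else β)) else 1))
    = ∑ z : Fin 4 → Fin Q, ((Q : ℝ) ^ 4)⁻¹ * ∏ i, ∏ j,
        (if c i j then (if i < j then (if z i = z j then α else β) else 1)
         else (if i < j then (1:ℝ) else 2)) := by
  have step1 : ∀ (z : Fin 4 → Fin Q) (x : Fin 4 → Fin 4 → Bool),
      (∏ i, ∏ j, if c i j then (if x i j then (1:ℝ) else 0) else 1) *
        (((Q : ℝ) ^ 4)⁻¹ * ∏ i, ∏ j, (if i < j then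
          (if x i j then (if z i = z j then α else β)
            else 1 - (if z i = z j then α else β)) else 1))
      = ((Q : ℝ) ^ 4)⁻¹ * ∏ i, ∏ j,
          ((if c i j then (if x i j then (1:ℝ) else 0) else 1) *
           (if i < j then
            (if x i j then (if z i = z j then α else β)
              else 1 - (if z i = z j then α else β)) else 1)) := by
    intro z x
    simp only [Finset.prod_mul_distrib]
    ring
  calc ∑ x : Fin 4 → Fin 4 → Bool,
      (∏ i, ∏ j, if c i j then (if x i j then (1:ℝ) else 0) else 1) *
      (∑ z : Fin 4 → Fin Q, ((Q : ℝ) ^ 4)⁻¹ *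
        ∏ i, ∏ j, (if i < j then
          (if x i j then (if z i = z j then α else β)
            else 1 - (if z i = z j then α else β)) else 1))
      = ∑ z : Fin 4 → Fin Q, ∑ x : Fin 4 → Fin 4 → Bool, ((Q : ℝ) ^ 4)⁻¹ * ∏ i, ∏ j,
          ((if c i j then (if x i j then (1:ℝ) else 0) else 1) *
           (if i < j then
            (if x i j then (if z i = z j then α else β)
              else 1 - (if z i = z j then α else β)) else 1)) := by
        rw [Finset.sum_comm]
        exact Finset.sum_congr rfl fun x _ => by
          rw [Finset.mul_sum]
          exact Finset.sum_congr rfl fun z _ => step1 z x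
    _ = ∑ z : Fin 4 → Fin Q, ((Q : ℝ) ^ 4)⁻¹ * ∏ i, ∏ j,
        (if c i j then (if i < j then (if z i = z j then α else β) else 1)
         else (if i < j then (1:ℝ) else 2)) := by
        refine Finset.sum_congr rfl fun z _ => ?_
        rw [← Finset.mul_sum]
        congr 1
        refine (factor4 (fun i j b =>
          (if c i j then (if b then (1:ℝ) else 0) else 1) *
          (if i < j then (if b then (if z i = z j then α else β)
            else 1 - (if z i = z j then α else β)) else 1))).trans ?_
        refine Finset.prod_congr rfl fun i _ => Finset.prod_congr rfl fun j _ => ?_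
        simp only []
        split_ifs <;> first | contradiction | ring

end Extraction

section Evaluation

/-- Single edge {0,1}. -/
def cE : Fin 4 → Fin 4 → Bool := fun i j => decide (i = 0 ∧ j = 1)
/-- Triangle {0,1,2}. -/
def cT : Fin 4 → Fin 4 → Bool := fun i j =>
  decide ((i = 0 ∧ j = 1) ∨ (i = 0 ∧ j = 2) ∨ (i = 1 ∧ j = 2))
/-- 4-cycle 0-1-2-3-0. -/
def cC : Fin 4 → Fin 4 → Bool := fun i j =>
  decide ((i = 0 ∧ j = 1) ∨ (i = 1 ∧ j = 2) ∨ (i = 2 ∧ j = 3) ∨ (i = 0 ∧ j = 3))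

lemma evalE (Q : ℕ) (α β : ℝ) :
    ∑ z : Fin 4 → Fin Q, ((Q : ℝ) ^ 4)⁻¹ * ∏ i, ∏ j,
        (if cE i j then (if i < j then (if z i = z j then α else β) else 1)
         else (if i < j then (1:ℝ) else 2))
    = ((Q:ℝ)^4)⁻¹ * (2^10 * ((Q:ℝ)^4*β + (Q:ℝ)^3*(α-β))) := by
  have h1 : ∀ z : Fin 4 → Fin Q,
      (∏ i, ∏ j, (if cE i j then (if i < j then (if z i = z j then α else β) else 1)
         else (if i < j then (1:ℝ) else 2)))
      = 2^10 * pe β (α-β) (z 0) (z 1) := by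
    intro z
    rw [Fin.prod_univ_four]
    rw [Fin.prod_univ_four (fun j => if cE 0 j then (if (0:Fin 4) < j then (if z 0 = z j then α else β) else 1) else (if (0:Fin 4) < j then (1:ℝ) else 2))]
    rw [Fin.prod_univ_four (fun j => if cE 1 j then (if (1:Fin 4) < j then (if z 1 = z j then α else β) else 1) else (if (1:Fin 4) < j then (1:ℝ) else 2))]
    rw [Fin.prod_univ_four (fun j => if cE 2 j then (if (2:Fin 4) < j then (if z 2 = z j then α else β) else 1) else (if (2:Fin 4) < j then (1:ℝ) else 2))]
    rw [Fin.prod_univ_four (fun j => if cE 3 j then (if (3:Fin 4) < j then (if z 3 = z j then α else β) else 1) else (if (3:Fin 4) < j then (1:ℝ) else 2))]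
    simp [cE, pe]
    split_ifs <;> ring
  calc ∑ z : Fin 4 → Fin Q, ((Q : ℝ) ^ 4)⁻¹ * ∏ i, ∏ j,
        (if cE i j then (if i < j then (if z i = z j then α else β) else 1)
         else (if i < j then (1:ℝ) else 2))
      = ∑ z : Fin 4 → Fin Q, ((Q : ℝ) ^ 4)⁻¹ * (2^10 * pe β (α-β) (z 0) (z 1)) :=
        Finset.sum_congr rfl fun z _ => by rw [h1 z]
    _ = ((Q:ℝ)^4)⁻¹ * (2^10 * ∑ z : Fin 4 → Fin Q, pe β (α-β) (z 0) (z 1)) := by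
        rw [← Finset.mul_sum, ← Finset.mul_sum]
    _ = ((Q:ℝ)^4)⁻¹ * (2^10 * ((Q:ℝ)^4*β + (Q:ℝ)^3*(α-β))) := by
        congr 1
        congr 1
        refine (aff_sum_fn4 (fun a b _c _d => pe β (α-β) a b)).trans ?_
        rw [S1val β (α-β), Fintype.card_fin]

lemma evalT (Q : ℕ) (α β : ℝ) :
    ∑ z : Fin 4 → Fin Q, ((Q : ℝ) ^ 4)⁻¹ * ∏ i, ∏ j,
        (if cT i j then (if i < j then (if z i = z j then α else β) else 1)
         else (if i < j then (1:ℝ) else 2))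
    = ((Q:ℝ)^4)⁻¹ * (2^10 * ((Q:ℝ)^4*β^3 + 3*(Q:ℝ)^3*β^2*(α-β)
        + 3*(Q:ℝ)^2*β*(α-β)^2 + (Q:ℝ)^2*(α-β)^3)) := by
  have h1 : ∀ z : Fin 4 → Fin Q,
      (∏ i, ∏ j, (if cT i j then (if i < j then (if z i = z j then α else β) else 1)
         else (if i < j then (1:ℝ) else 2)))
      = 2^10 * (pe β (α-β) (z 0) (z 1) * pe β (α-β) (z 0) (z 2) * pe β (α-β) (z 1) (z 2)) := by
    intro z
    rw [Fin.prod_univ_four]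
    rw [Fin.prod_univ_four (fun j => if cT 0 j then (if (0:Fin 4) < j then (if z 0 = z j then α else β) else 1) else (if (0:Fin 4) < j then (1:ℝ) else 2))]
    rw [Fin.prod_univ_four (fun j => if cT 1 j then (if (1:Fin 4) < j then (if z 1 = z j then α else β) else 1) else (if (1:Fin 4) < j then (1:ℝ) else 2))]
    rw [Fin.prod_univ_four (fun j => if cT 2 j then (if (2:Fin 4) < j then (if z 2 = z j then α else β) else 1) else (if (2:Fin 4) < j then (1:ℝ) else 2))]
    rw [Fin.prod_univ_four (fun j => if cT 3 j then (if (3:Fin 4) < j then (if z 3 = z j then α else β) else 1) else (if (3:Fin 4) < j then (1:ℝ) else 2))]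
    simp [cT, pe]
    split_ifs <;> ring
  calc ∑ z : Fin 4 → Fin Q, ((Q : ℝ) ^ 4)⁻¹ * ∏ i, ∏ j,
        (if cT i j then (if i < j then (if z i = z j then α else β) else 1)
         else (if i < j then (1:ℝ) else 2))
      = ∑ z : Fin 4 → Fin Q, ((Q : ℝ) ^ 4)⁻¹ *
          (2^10 * (pe β (α-β) (z 0) (z 1) * pe β (α-β) (z 0) (z 2) * pe β (α-β) (z 1) (z 2))) :=
        Finset.sum_congr rfl fun z _ => by rw [h1 z]
    _ = ((Q:ℝ)^4)⁻¹ * (2^10 * ∑ z : Fin 4 → Fin Q,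
          pe β (α-β) (z 0) (z 1) * pe β (α-β) (z 0) (z 2) * pe β (α-β) (z 1) (z 2)) := by
        rw [← Finset.mul_sum, ← Finset.mul_sum]
    _ = ((Q:ℝ)^4)⁻¹ * (2^10 * ((Q:ℝ)^4*β^3 + 3*(Q:ℝ)^3*β^2*(α-β)
        + 3*(Q:ℝ)^2*β*(α-β)^2 + (Q:ℝ)^2*(α-β)^3)) := by
        congr 1
        congr 1
        refine (aff_sum_fn4 (fun a b c _d =>
          pe β (α-β) a b * pe β (α-β) a c * pe β (α-β) b c)).trans ?_
        rw [S3val β (α-β), Fintype.card_fin]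

lemma evalC (Q : ℕ) (α β : ℝ) :
    ∑ z : Fin 4 → Fin Q, ((Q : ℝ) ^ 4)⁻¹ * ∏ i, ∏ j,
        (if cC i j then (if i < j then (if z i = z j then α else β) else 1)
         else (if i < j then (1:ℝ) else 2))
    = ((Q:ℝ)^4)⁻¹ * (2^10 * ((Q:ℝ)^4*β^4 + 4*(Q:ℝ)^3*β^3*(α-β)
        + 6*(Q:ℝ)^2*β^2*(α-β)^2 + 4*(Q:ℝ)*β*(α-β)^3 + (Q:ℝ)*(α-β)^4)) := by
  have h1 : ∀ z : Fin 4 → Fin Q,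
      (∏ i, ∏ j, (if cC i j then (if i < j then (if z i = z j then α else β) else 1)
         else (if i < j then (1:ℝ) else 2)))
      = 2^10 * (pe β (α-β) (z 0) (z 1) * pe β (α-β) (z 1) (z 2)
          * pe β (α-β) (z 2) (z 3) * pe β (α-β) (z 0) (z 3)) := by
    intro z
    rw [Fin.prod_univ_four]
    rw [Fin.prod_univ_four (fun j => if cC 0 j then (if (0:Fin 4) < j then (if z 0 = z j then α else β) else 1) else (if (0:Fin 4) < j then (1:ℝ) else 2))]
    rw [Fin.prod_univ_four (fun j => if cC 1 j then (if (1:Fin 4) < j then (if z 1 = z j then α else β) else 1) else (if (1:Fin 4) < j then (1:ℝ) else 2))]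
    rw [Fin.prod_univ_four (fun j => if cC 2 j then (if (2:Fin 4) < j then (if z 2 = z j then α else β) else 1) else (if (2:Fin 4) < j then (1:ℝ) else 2))]
    rw [Fin.prod_univ_four (fun j => if cC 3 j then (if (3:Fin 4) < j then (if z 3 = z j then α else β) else 1) else (if (3:Fin 4) < j then (1:ℝ) else 2))]
    simp [cC, pe]
    split_ifs <;> ring
  calc ∑ z : Fin 4 → Fin Q, ((Q : ℝ) ^ 4)⁻¹ * ∏ i, ∏ j,
        (if cC i j then (if i < j then (if z i = z j then α else β) else 1)
         else (if i < j then (1:ℝ) else 2))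
      = ∑ z : Fin 4 → Fin Q, ((Q : ℝ) ^ 4)⁻¹ *
          (2^10 * (pe β (α-β) (z 0) (z 1) * pe β (α-β) (z 1) (z 2)
            * pe β (α-β) (z 2) (z 3) * pe β (α-β) (z 0) (z 3))) :=
        Finset.sum_congr rfl fun z _ => by rw [h1 z]
    _ = ((Q:ℝ)^4)⁻¹ * (2^10 * ∑ z : Fin 4 → Fin Q,
          pe β (α-β) (z 0) (z 1) * pe β (α-β) (z 1) (z 2)
            * pe β (α-β) (z 2) (z 3) * pe β (α-β) (z 0) (z 3)) := by
        rw [← Finset.mul_sum, ← Finset.mul_sum]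
    _ = ((Q:ℝ)^4)⁻¹ * (2^10 * ((Q:ℝ)^4*β^4 + 4*(Q:ℝ)^3*β^3*(α-β)
        + 6*(Q:ℝ)^2*β^2*(α-β)^2 + 4*(Q:ℝ)*β*(α-β)^3 + (Q:ℝ)*(α-β)^4)) := by
        congr 1
        congr 1
        refine (aff_sum_fn4 (fun a b c d =>
          pe β (α-β) a b * pe β (α-β) b c * pe β (α-β) c d * pe β (α-β) a d)).trans ?_
        rw [S4val β (α-β), Fintype.card_fin]

end Evaluation

/-- Identifiability of the parameters `Q`, `α`, `β` of the binary affiliation random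
graph model with uniform group priors from the distribution of `K₄`. -/
theorem affiliation_uniform_identifiable_from_K4
    (Q Q' : ℕ) (hQ : 2 ≤ Q) (hQ' : 2 ≤ Q')
    (α β α' β' : ℝ)
    (hα : α ∈ Set.Icc (0 : ℝ) 1) (hβ : β ∈ Set.Icc (0 : ℝ) 1)
    (hα' : α' ∈ Set.Icc (0 : ℝ) 1) (hβ' : β' ∈ Set.Icc (0 : ℝ) 1)
    (hαβ : α ≠ β) (hαβ' : α' ≠ β')
    (heq : ∀ x : Fin 4 → Fin 4 → Bool,
      (∑ z : Fin 4 → Fin Q, ((Q : ℝ) ^ 4)⁻¹ *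
        ∏ i, ∏ j, (if i < j then
          (if x i j then (if z i = z j then α else β)
            else 1 - (if z i = z j then α else β)) else 1))
      = ∑ z : Fin 4 → Fin Q', ((Q' : ℝ) ^ 4)⁻¹ *
        ∏ i, ∏ j, (if i < j then
          (if x i j then (if z i = z j then α' else β')
            else 1 - (if z i = z j then α' else β')) else 1)) :
    Q = Q' ∧ α = α' ∧ β = β' := by
  have hq2 : (2:ℝ) ≤ (Q:ℝ) := by exact_mod_cast hQ
  have hq2' : (2:ℝ) ≤ (Q':ℝ) := by exact_mod_cast hQ'
  have hq0 : (Q:ℝ) ≠ 0 := by linarith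
  have hq0' : (Q':ℝ) ≠ 0 := by linarith
  set D : ℝ := α - β with hD
  set D' : ℝ := α' - β' with hD'
  have hD0 : D ≠ 0 := sub_ne_zero.2 hαβ
  have hD0' : D' ≠ 0 := sub_ne_zero.2 hαβ'
  -- Derive the three moment equations
  have hmom : ∀ c : Fin 4 → Fin 4 → Bool,
      (∑ z : Fin 4 → Fin Q, ((Q : ℝ) ^ 4)⁻¹ * ∏ i, ∏ j,
        (if c i j then (if i < j then (if z i = z j then α else β) else 1)
         else (if i < j then (1:ℝ) else 2)))
      = ∑ z : Fin 4 → Fin Q', ((Q' : ℝ) ^ 4)⁻¹ * ∏ i, ∏ j,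
        (if c i j then (if i < j then (if z i = z j then α' else β') else 1)
         else (if i < j then (1:ℝ) else 2)) := by
    intro c
    rw [← extract Q α β c, ← extract Q' α' β' c]
    exact Finset.sum_congr rfl fun x _ => by rw [heq x]
  have E1 := hmom cE
  rw [evalE Q α β, evalE Q' α' β'] at E1
  have E3 := hmom cT
  rw [evalT Q α β, evalT Q' α' β'] at E3
  have E4 := hmom cC
  rw [evalC Q α β, evalC Q' α' β'] at E4
  -- Normalize to μ/d form
  have norm1 : ∀ (r b d : ℝ), r ≠ 0 →
      ((r:ℝ)^4)⁻¹ * (2^10 * (r^4*b + r^3*d)) = 2^10 * (b + d/r) := by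
    intro r b d hr; field_simp
  have norm3 : ∀ (r b d : ℝ), r ≠ 0 →
      (r^4)⁻¹ * (2^10 * (r^4*b^3 + 3*r^3*b^2*d + 3*r^2*b*d^2 + r^2*d^3))
      = 2^10 * ((b + d/r)^3 + (r-1)*(d/r)^3) := by
    intro r b d hr; field_simp; ring
  have norm4 : ∀ (r b d : ℝ), r ≠ 0 →
      (r^4)⁻¹ * (2^10 * (r^4*b^4 + 4*r^3*b^3*d + 6*r^2*b^2*d^2 + 4*r*b*d^3 + r*d^4))
      = 2^10 * ((b + d/r)^4 + (r-1)*(d/r)^4) := by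
    intro r b d hr; field_simp; ring
  rw [norm1 (Q:ℝ) β D hq0, norm1 (Q':ℝ) β' D' hq0'] at E1
  rw [norm3 (Q:ℝ) β D hq0, norm3 (Q':ℝ) β' D' hq0'] at E3
  rw [norm4 (Q:ℝ) β D hq0, norm4 (Q':ℝ) β' D' hq0'] at E4
  have h2ne : ((2:ℝ)^10) ≠ 0 := by norm_num
  have h1 : β + D/(Q:ℝ) = β' + D'/(Q':ℝ) := mul_left_cancel₀ h2ne E1
  have h3 : (β + D/(Q:ℝ))^3 + ((Q:ℝ)-1)*(D/(Q:ℝ))^3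
      = (β' + D'/(Q':ℝ))^3 + ((Q':ℝ)-1)*(D'/(Q':ℝ))^3 := mul_left_cancel₀ h2ne E3
  have h4 : (β + D/(Q:ℝ))^4 + ((Q:ℝ)-1)*(D/(Q:ℝ))^4
      = (β' + D'/(Q':ℝ))^4 + ((Q':ℝ)-1)*(D'/(Q':ℝ))^4 := mul_left_cancel₀ h2ne E4
  rw [h1] at h3 h4
  have hc3 : ((Q:ℝ)-1)*(D/(Q:ℝ))^3 = ((Q':ℝ)-1)*(D'/(Q':ℝ))^3 := by linarith
  have hc4 : ((Q:ℝ)-1)*(D/(Q:ℝ))^4 = ((Q':ℝ)-1)*(D'/(Q':ℝ))^4 := by linarith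
  have hd : D/(Q:ℝ) ≠ 0 := div_ne_zero hD0 hq0
  have hd' : D'/(Q':ℝ) ≠ 0 := div_ne_zero hD0' hq0'
  have hq1 : (Q:ℝ) - 1 ≠ 0 := by linarith
  have hnz : ((Q:ℝ)-1)*(D/(Q:ℝ))^3 ≠ 0 := mul_ne_zero hq1 (pow_ne_zero _ hd)
  have key : D/(Q:ℝ) = D'/(Q':ℝ) := by
    have hstep : ((Q:ℝ)-1)*(D/(Q:ℝ))^3 * (D/(Q:ℝ))
        = ((Q:ℝ)-1)*(D/(Q:ℝ))^3 * (D'/(Q':ℝ)) := by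
      calc ((Q:ℝ)-1)*(D/(Q:ℝ))^3 * (D/(Q:ℝ)) = ((Q:ℝ)-1)*(D/(Q:ℝ))^4 := by ring
        _ = ((Q':ℝ)-1)*(D'/(Q':ℝ))^4 := hc4
        _ = ((Q':ℝ)-1)*(D'/(Q':ℝ))^3 * (D'/(Q':ℝ)) := by ring
        _ = ((Q:ℝ)-1)*(D/(Q:ℝ))^3 * (D'/(Q':ℝ)) := by rw [← hc3]
    exact mul_left_cancel₀ hnz hstep
  have hqeq : (Q:ℝ) = (Q':ℝ) := by
    have h5 : ((Q:ℝ)-1)*(D/(Q:ℝ))^3 = ((Q':ℝ)-1)*(D/(Q:ℝ))^3 := by rw [hc3, key]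
    have h6 := mul_right_cancel₀ (pow_ne_zero 3 hd) h5
    linarith
  have hQQ' : Q = Q' := by exact_mod_cast hqeq
  have hDD' : D = D' := by
    have h7 : D/(Q:ℝ) = D'/(Q:ℝ) := by rw [key, hqeq]
    field_simp at h7
    exact h7
  have hββ' : β = β' := by
    have h8 : β + D/(Q:ℝ) = β' + D/(Q:ℝ) := by rw [h1, key]
    linarith
  refine ⟨hQQ', ?_, hββ'⟩
  have h9 : α - β = α' - β' := hDD'
  linarith [hββ']
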